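/- Let L ≥ 1 be a positive integer, let I, T, N be positive reals, let σ_{y1},…,σ_{yL} be positive reals with Λhalf = diag(σ_{y1},…,σ_{yL}), and let λ3, λ4, τ3, τ4, C1, C2 be reals satisfying λ3 − τ3 ≠ 0, λ4 − τ4 ≠ 0, λ3 + (L−1)τ3 ≠ 0, λ4 + (L−1)τ4 ≠ 0, C1(λ4 − τ4) − C2(λ3 − τ3) ≠ 0, and C1(λ4 + (L−1)τ4) − C2(λ3 + (L−1)τ3) ≠ 0. Then the L×L matrix Ω = (I·T/N)·Λhalf·[C1·((λ3 − τ3)·I_L + τ3·J_L)^{-1} − C2·((λ4 − τ4)·I_L + τ4·J_L)^{-1}]^{-1}·Λhalf is well defined, and for every l ∈ {1,…,L} its l-th diagonal entry equals ((I·T/N)·σ_{yl}² / [C1(λ4 − τ4) − C2(λ3 − τ3)]) · ([C1·λ3·(λ4 − τ4)·(λ4 + (L−1)τ4) − C2·λ4·(λ3 − τ3)·(λ3 + (L−1)τ3)] / [C1(λ4 + (L−1)τ4) − C2(λ3 + (L−1)τ3)]). -/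

import Mathlib

open Matrix

def allOnes (u : ℕ) : Matrix (Fin u) (Fin u) ℝ := Matrix.of fun _ _ => 1

noncomputable def Mab (L : ℕ) (a b : ℝ) : Matrix (Fin L) (Fin L) ℝ :=
  a • (1 : Matrix (Fin L) (Fin L) ℝ) + b • allOnes L

lemma ones_mul_ones (L : ℕ) : allOnes L * allOnes L = (L : ℝ) • allOnes L := by
  ext i j; simp [allOnes, Matrix.mul_apply, Matrix.smul_apply]

lemma Mab_mul (L : ℕ) (a b c d : ℝ) :
    Mab L a b * Mab L c d = Mab L (a*c) (a*d + b*c + (L:ℝ)*b*d) := by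
  simp only [Mab, add_mul, mul_add, Matrix.smul_mul, Matrix.mul_smul, smul_smul,
    one_mul, mul_one, ones_mul_ones]
  module

lemma Mab_entry (L : ℕ) (a b : ℝ) (l : Fin L) : Mab L a b l l = a + b := by
  simp [Mab, allOnes, Matrix.one_apply]

lemma Mab_one (L : ℕ) : Mab L 1 0 = 1 := by simp [Mab]

lemma Mab_right_inv (L : ℕ) (a b : ℝ) (ha : a ≠ 0) (hs : a + (L:ℝ)*b ≠ 0) :
    Mab L a b * Mab L (1/a) (-b/(a*(a+(L:ℝ)*b))) = 1 := by
  rw [Mab_mul]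
  have e1 : a * (1/a) = 1 := by field_simp
  have e2 : a * (-b/(a*(a+(L:ℝ)*b))) + b * (1/a) + (L:ℝ)*b*(-b/(a*(a+(L:ℝ)*b))) = 0 := by
    have hs' : b * (L:ℝ) + a ≠ 0 := by rwa [add_comm, mul_comm]
    field_simp; linear_combination (-b) * mul_inv_cancel₀ hs'
  rw [e1, e2, Mab_one]

lemma Mab_isUnit (L : ℕ) (a b : ℝ) (ha : a ≠ 0) (hs : a + (L:ℝ)*b ≠ 0) :
    IsUnit (Mab L a b) := by
  rw [Matrix.isUnit_iff_isUnit_det]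
  exact Matrix.isUnit_det_of_right_inverse (Mab_right_inv L a b ha hs)

lemma Mab_inv (L : ℕ) (a b : ℝ) (ha : a ≠ 0) (hs : a + (L:ℝ)*b ≠ 0) :
    (Mab L a b)⁻¹ = Mab L (1/a) (-b/(a*(a+(L:ℝ)*b))) :=
  Matrix.inv_eq_right_inv (Mab_right_inv L a b ha hs)

lemma smul_Mab (L : ℕ) (c a b : ℝ) : c • Mab L a b = Mab L (c*a) (c*b) := by
  simp [Mab, smul_add, smul_smul]

lemma Mab_sub (L : ℕ) (a b c d : ℝ) : Mab L a b - Mab L c d = Mab L (a-c) (b-d) := by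
  simp only [Mab, sub_smul]; module

theorem diag_entry_common_icc_closed_cohort
    (L : ℕ) (hL : 1 ≤ L) (I T N : ℝ) (hI : 0 < I) (hT : 0 < T) (hN : 0 < N)
    (σ : Fin L → ℝ) (hσ : ∀ l, 0 < σ l)
    (lam3 lam4 tau3 tau4 C1 C2 : ℝ)
    (h1 : lam3 - tau3 ≠ 0) (h2 : lam4 - tau4 ≠ 0)
    (h3 : lam3 + ((L : ℝ) - 1) * tau3 ≠ 0) (h4 : lam4 + ((L : ℝ) - 1) * tau4 ≠ 0)
    (h5 : C1 * (lam4 - tau4) - C2 * (lam3 - tau3) ≠ 0)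
    (h6 : C1 * (lam4 + ((L : ℝ) - 1) * tau4) - C2 * (lam3 + ((L : ℝ) - 1) * tau3) ≠ 0) :
    IsUnit ((lam3 - tau3) • (1 : Matrix (Fin L) (Fin L) ℝ) + tau3 • allOnes L) ∧
    IsUnit ((lam4 - tau4) • (1 : Matrix (Fin L) (Fin L) ℝ) + tau4 • allOnes L) ∧
    IsUnit (C1 • ((lam3 - tau3) • (1 : Matrix (Fin L) (Fin L) ℝ) + tau3 • allOnes L)⁻¹ -
            C2 • ((lam4 - tau4) • (1 : Matrix (Fin L) (Fin L) ℝ) + tau4 • allOnes L)⁻¹) ∧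
    ∀ l : Fin L,
      ((I * T / N) •
        (Matrix.diagonal σ *
          (C1 • ((lam3 - tau3) • (1 : Matrix (Fin L) (Fin L) ℝ) + tau3 • allOnes L)⁻¹ -
           C2 • ((lam4 - tau4) • (1 : Matrix (Fin L) (Fin L) ℝ) + tau4 • allOnes L)⁻¹)⁻¹ *
          Matrix.diagonal σ)) l l =
      (I * T / N * (σ l) ^ 2 / (C1 * (lam4 - tau4) - C2 * (lam3 - tau3))) *
        ((C1 * lam3 * (lam4 - tau4) * (lam4 + ((L : ℝ) - 1) * tau4) -
          C2 * lam4 * (lam3 - tau3) * (lam3 + ((L : ℝ) - 1) * tau3)) /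
         (C1 * (lam4 + ((L : ℝ) - 1) * tau4) - C2 * (lam3 + ((L : ℝ) - 1) * tau3))) := by
  -- abbreviations
  have hM3 : (lam3 - tau3) • (1 : Matrix (Fin L) (Fin L) ℝ) + tau3 • allOnes L
      = Mab L (lam3 - tau3) tau3 := rfl
  have hM4 : (lam4 - tau4) • (1 : Matrix (Fin L) (Fin L) ℝ) + tau4 • allOnes L
      = Mab L (lam4 - tau4) tau4 := rfl
  have hs3 : (lam3 - tau3) + (L:ℝ)*tau3 ≠ 0 := fun h => h3 (by linarith)
  have hs4 : (lam4 - tau4) + (L:ℝ)*tau4 ≠ 0 := fun h => h4 (by linarith)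
  set A : ℝ := C1*(1/(lam3-tau3)) - C2*(1/(lam4-tau4)) with hAdef
  set B : ℝ := C1*(-tau3/((lam3-tau3)*((lam3-tau3)+(L:ℝ)*tau3)))
             - C2*(-tau4/((lam4-tau4)*((lam4-tau4)+(L:ℝ)*tau4))) with hBdef
  have hAeq : A = (C1*(lam4-tau4) - C2*(lam3-tau3))/((lam3-tau3)*(lam4-tau4)) := by
    rw [hAdef]; field_simp
  have hA : A ≠ 0 := by
    rw [hAeq]; exact div_ne_zero h5 (mul_ne_zero h1 h2)
  have hABeq : A + (L:ℝ)*B =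
      (C1*((lam4-tau4)+(L:ℝ)*tau4) - C2*((lam3-tau3)+(L:ℝ)*tau3))
        / (((lam3-tau3)+(L:ℝ)*tau3) * ((lam4-tau4)+(L:ℝ)*tau4)) := by
    rw [hAdef, hBdef]
    generalize hq3 : lam3 - tau3 + (L:ℝ)*tau3 = q3 at hs3 ⊢
    generalize hq4 : lam4 - tau4 + (L:ℝ)*tau4 = q4 at hs4 ⊢
    field_simp; subst hq3 hq4; ring
  have h6' : C1*((lam4-tau4)+(L:ℝ)*tau4) - C2*((lam3-tau3)+(L:ℝ)*tau3) ≠ 0 := by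
    intro h; exact h6 (by linear_combination h)
  have hAB : A + (L:ℝ)*B ≠ 0 := by
    rw [hABeq]; exact div_ne_zero h6' (mul_ne_zero hs3 hs4)
  have hdiff : C1 • (Mab L (lam3-tau3) tau3)⁻¹ - C2 • (Mab L (lam4-tau4) tau4)⁻¹
      = Mab L A B := by
    rw [Mab_inv L _ _ h1 hs3, Mab_inv L _ _ h2 hs4, smul_Mab, smul_Mab, Mab_sub,
      hAdef, hBdef]
  refine ⟨hM3 ▸ Mab_isUnit L _ _ h1 hs3, hM4 ▸ Mab_isUnit L _ _ h2 hs4, ?_, ?_⟩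
  · rw [hM3, hM4, hdiff]; exact Mab_isUnit L A B hA hAB
  · intro l
    have hnum : A + ((L:ℝ)-1)*B =
        (C1*lam3*((lam4-tau4)+(L:ℝ)*tau4)*(lam4-tau4)
          - C2*lam4*((lam3-tau3)+(L:ℝ)*tau3)*(lam3-tau3))
        / ((lam3-tau3)*(lam4-tau4)*(((lam3-tau3)+(L:ℝ)*tau3)*((lam4-tau4)+(L:ℝ)*tau4))) := by
      rw [hAdef, hBdef]
      generalize hq3 : lam3 - tau3 + (L:ℝ)*tau3 = q3 at hs3 ⊢
      generalize hq4 : lam4 - tau4 + (L:ℝ)*tau4 = q4 at hs4 ⊢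
      field_simp; subst hq3 hq4; ring
    have hval : 1/A + -B/(A*(A+(L:ℝ)*B)) = (A + ((L:ℝ)-1)*B)/(A*(A+(L:ℝ)*B)) := by
      have hAB' : B * (L:ℝ) + A ≠ 0 := by rwa [add_comm, mul_comm]
      field_simp; linear_combination (-1) * mul_inv_cancel₀ hAB'
    have key : 1/A + -B/(A*(A+(L:ℝ)*B)) =
        (C1*lam3*((lam4-tau4)+(L:ℝ)*tau4)*(lam4-tau4)
          - C2*lam4*((lam3-tau3)+(L:ℝ)*tau3)*(lam3-tau3))
        / ((C1*(lam4-tau4) - C2*(lam3-tau3)) *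
           (C1*((lam4-tau4)+(L:ℝ)*tau4) - C2*((lam3-tau3)+(L:ℝ)*tau3))) := by
      rw [hval, hnum, hABeq, hAeq]
      have hs4' : lam4 - tau4 + tau4 * (L:ℝ) ≠ 0 := by rwa [mul_comm]
      field_simp
    rw [hM3, hM4, hdiff, Mab_inv L A B hA hAB]
    simp only [Matrix.smul_apply, Matrix.mul_diagonal, Matrix.diagonal_mul, Mab_entry,
      smul_eq_mul]
    rw [key]
    field_simp
    ring
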